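/- Let k, l be positive integers and let t = (t_1, ..., t_{2k}) be a tuple with each t_i ∈ {0, 1, ..., l}. Let α : ℕ → ℂ be a sequence satisfying |α_n| < 1 for all n, Σ_{n=0}^{∞} |α_{n+1} − α_n|^2 < ∞, and α_n → 0 as n → ∞. Then the series Σ_{n=0}^{∞} ( Re( ∏_{j=1}^{k} α_{n+t_{2j−1}} · conj(α_{n+t_{2j}}) ) − |α_n|^{2k} ) is convergent, i.e. its partial sums converge as N → ∞. -/

import Mathlib

open Filter Finset

private def Conv (f : ℕ → ℝ) : Prop :=
  ∃ S : ℝ, Tendsto (fun N => ∑ n ∈ Finset.range N, f n) atTop (nhds S)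

private lemma Conv.add {f g : ℕ → ℝ} (hf : Conv f) (hg : Conv g) :
    Conv (fun n => f n + g n) := by
  obtain ⟨S, hS⟩ := hf; obtain ⟨T, hT⟩ := hg
  exact ⟨S + T, by simpa [Finset.sum_add_distrib] using hS.add hT⟩

private lemma Conv.congr {f g : ℕ → ℝ} (h : ∀ n, f n = g n) (hf : Conv f) : Conv g := by
  obtain ⟨S, hS⟩ := hf
  exact ⟨S, by simpa [show f = g from funext h] using hS⟩

private lemma conv_of_summable {f : ℕ → ℝ} (h : Summable f) : Conv f :=
  ⟨∑' n, f n, h.hasSum.tendsto_sum_nat⟩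

private lemma conv_telescope {b : ℕ → ℝ} {L : ℝ} (hb : Tendsto b atTop (nhds L)) :
    Conv (fun n => b (n + 1) - b n) :=
  ⟨L - b 0, by
    have := hb.sub_const (b 0)
    refine this.congr fun N => (Finset.sum_range_sub b N).symm⟩

private lemma Conv.shift {f : ℕ → ℝ} (hf : Conv f) (s : ℕ) : Conv (fun n => f (n + s)) := by
  obtain ⟨S, hS⟩ := hf
  refine ⟨S - ∑ i ∈ Finset.range s, f i, ?_⟩
  have h1 : Tendsto (fun N => ∑ n ∈ Finset.range (s + N), f n) atTop (nhds S) :=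
    hS.comp (tendsto_add_atTop_nat s |>.congr (fun n => by omega))
  have h2 := h1.sub_const (∑ i ∈ Finset.range s, f i)
  refine h2.congr (fun N => ?_)
  rw [Finset.sum_range_add]
  simp [add_comm]

private lemma Conv.of_sub_summable {f g : ℕ → ℝ} (hg : Conv g)
    (h : Summable (fun n => f n - g n)) : Conv f :=
  ((conv_of_summable h).add hg).congr (fun n => by ring)

private lemma abs_prod_sub_prod_le {ι : Type*} (s : Finset ι) (f g : ι → ℂ)
    (hf : ∀ i ∈ s, ‖f i‖ ≤ 1) (hg : ∀ i ∈ s, ‖g i‖ ≤ 1) :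
    ‖∏ i ∈ s, f i - ∏ i ∈ s, g i‖ ≤ ∑ i ∈ s, ‖f i - g i‖ := by
  induction s using Finset.cons_induction with
  | empty => simp
  | cons a s ha ih =>
    rw [Finset.prod_cons, Finset.prod_cons, Finset.sum_cons]
    have key : f a * ∏ i ∈ s, f i - g a * ∏ i ∈ s, g i
        = (f a - g a) * ∏ i ∈ s, f i + g a * (∏ i ∈ s, f i - ∏ i ∈ s, g i) := by ring
    rw [key]
    have hprodf : ‖∏ i ∈ s, f i‖ ≤ 1 := by
      rw [norm_prod]
      exact Finset.prod_le_one (fun i hi => (norm_nonneg _))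
        (fun i hi => hf i (Finset.mem_cons_of_mem hi))
    have hga : ‖g a‖ ≤ 1 := hg a (Finset.mem_cons_self a s)
    calc ‖_‖ ≤ ‖(f a - g a) * ∏ i ∈ s, f i‖
          + ‖g a * (∏ i ∈ s, f i - ∏ i ∈ s, g i)‖ := norm_add_le _ _
      _ ≤ ‖f a - g a‖ * 1 + 1 * (∑ i ∈ s, ‖f i - g i‖) := by
          rw [norm_mul, norm_mul]
          exact add_le_add (mul_le_mul_of_nonneg_left hprodf (norm_nonneg _))
            (mul_le_mul hga (ih (fun i hi => hf i (Finset.mem_cons_of_mem hi))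
              (fun i hi => hg i (Finset.mem_cons_of_mem hi))) (norm_nonneg _) zero_le_one)
      _ = ‖f a - g a‖ + ∑ i ∈ s, ‖f i - g i‖ := by ring

private lemma abs_pow_sub_pow_le_aux {x y : ℝ} (hx0 : 0 ≤ x) (hx1 : x ≤ 1) (hy0 : 0 ≤ y)
    (hy1 : y ≤ 1) (j : ℕ) : |x ^ j - y ^ j| ≤ j * |x - y| := by
  have : x ^ j - y ^ j = (∑ i ∈ range j, x ^ i * y ^ (j - 1 - i)) * (x - y) :=
    (geom_sum₂_mul x y j).symm
  rw [this, abs_mul]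
  gcongr
  calc |∑ i ∈ range j, x ^ i * y ^ (j - 1 - i)| ≤ ∑ i ∈ range j, |x ^ i * y ^ (j - 1 - i)| :=
        Finset.abs_sum_le_sum_abs _ _
    _ ≤ ∑ i ∈ range j, 1 := by
        refine Finset.sum_le_sum fun i _ => ?_
        rw [abs_mul, abs_pow, abs_pow, abs_of_nonneg hx0, abs_of_nonneg hy0]
        exact mul_le_one₀ (pow_le_one₀ hx0 hx1) (pow_nonneg hy0 _) (pow_le_one₀ hy0 hy1)
    _ = j := by simp

private lemma poly_ineq {x y : ℝ} (hx0 : 0 ≤ x) (hx1 : x ≤ 1) (hy0 : 0 ≤ y) (hy1 : y ≤ 1)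
    (k : ℕ) : |(x - y) * (k * y ^ (k - 1)) - (x ^ k - y ^ k)| ≤ k ^ 2 * (x - y) ^ 2 := by
  have hgs : x ^ k - y ^ k = (∑ i ∈ range k, x ^ i * y ^ (k - 1 - i)) * (x - y) :=
    (geom_sum₂_mul x y k).symm
  have hky : (k : ℝ) * y ^ (k - 1) = ∑ i ∈ range k, y ^ i * y ^ (k - 1 - i) := by
    rw [Finset.sum_congr rfl (fun i hi => ?_), Finset.sum_const, card_range, nsmul_eq_mul]
    rw [← pow_add]
    congr 1
    have := Finset.mem_range.1 hi
    omega
  have key : (x - y) * ((k : ℝ) * y ^ (k - 1)) - (x ^ k - y ^ k)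
      = (∑ i ∈ range k, (y ^ i - x ^ i) * y ^ (k - 1 - i)) * (x - y) := by
    have hs : ∑ i ∈ range k, (y ^ i - x ^ i) * y ^ (k - 1 - i)
        = (∑ i ∈ range k, y ^ i * y ^ (k - 1 - i)) - ∑ i ∈ range k, x ^ i * y ^ (k - 1 - i) := by
      rw [← Finset.sum_sub_distrib]
      exact Finset.sum_congr rfl fun i _ => by ring
    rw [hgs, hky, hs]
    ring
  rw [key, abs_mul]
  have h1 : |∑ i ∈ range k, (y ^ i - x ^ i) * y ^ (k - 1 - i)| ≤ k ^ 2 * |x - y| := by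
    calc |∑ i ∈ range k, (y ^ i - x ^ i) * y ^ (k - 1 - i)|
        ≤ ∑ i ∈ range k, |(y ^ i - x ^ i) * y ^ (k - 1 - i)| := Finset.abs_sum_le_sum_abs _ _
      _ ≤ ∑ i ∈ range k, (k : ℝ) * |x - y| := by
          refine Finset.sum_le_sum fun i hi => ?_
          rw [abs_mul]
          calc |y ^ i - x ^ i| * |y ^ (k - 1 - i)|
              ≤ (i * |y - x|) * 1 := by
                refine mul_le_mul (abs_pow_sub_pow_le_aux hy0 hy1 hx0 hx1 i) ?_ (abs_nonneg _)
                  (by positivity)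
                rw [abs_pow, abs_of_nonneg hy0]; exact pow_le_one₀ hy0 hy1
            _ = i * |x - y| := by rw [mul_one, abs_sub_comm]
            _ ≤ k * |x - y| := by
                gcongr
                exact_mod_cast (Finset.mem_range.1 hi).le
      _ = k ^ 2 * |x - y| := by rw [Finset.sum_const, card_range, nsmul_eq_mul]; ring
  calc |∑ i ∈ range k, (y ^ i - x ^ i) * y ^ (k - 1 - i)| * |x - y|
      ≤ (k ^ 2 * |x - y|) * |x - y| := by gcongr
    _ = k ^ 2 * (x - y) ^ 2 := by rw [mul_assoc, ← abs_mul, ← sq, abs_sq]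

private lemma re_sub_mul_conj (u v : ℂ) :
    ((v - u) * (starRingEnd ℂ) u).re
      = (Complex.normSq v - Complex.normSq u - Complex.normSq (v - u)) / 2 := by
  simp [Complex.normSq_apply, Complex.mul_re, Complex.sub_re, Complex.sub_im]
  ring

private lemma abs_diff_le' (α : ℕ → ℂ) (l n c c' : ℕ) (hc : c ≤ l) (hcc : c' ≤ c) :
    ‖α (n + c) - α (n + c')‖
      ≤ ∑ i ∈ range l, ‖α (n + i + 1) - α (n + i)‖ := by
  have htel : ∀ d : ℕ, α (n + d) - α n
      = ∑ i ∈ range d, (α (n + i + 1) - α (n + i)) := by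
    intro d
    have := Finset.sum_range_sub (fun i => α (n + i)) d
    simpa [show ∀ i, n + (i + 1) = n + i + 1 from fun i => by omega] using this.symm
  have hIco : α (n + c) - α (n + c')
      = ∑ i ∈ Finset.Ico c' c, (α (n + i + 1) - α (n + i)) := by
    rw [Finset.sum_Ico_eq_sub _ hcc, ← htel, ← htel]
    ring
  rw [hIco]
  calc ‖∑ i ∈ Finset.Ico c' c, (α (n + i + 1) - α (n + i))‖
      ≤ ∑ i ∈ Finset.Ico c' c, ‖α (n + i + 1) - α (n + i)‖ := by
        exact norm_sum_le _ _
    _ ≤ ∑ i ∈ range l, ‖α (n + i + 1) - α (n + i)‖ := by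
        refine Finset.sum_le_sum_of_subset_of_nonneg ?_ (fun i _ _ => norm_nonneg _)
        intro i hi
        rw [Finset.mem_Ico] at hi
        rw [Finset.mem_range]
        omega

private lemma abs_diff_le (α : ℕ → ℂ) (l n c c' : ℕ) (hc : c ≤ l) (hc' : c' ≤ l) :
    ‖α (n + c) - α (n + c')‖
      ≤ ∑ i ∈ range l, ‖α (n + i + 1) - α (n + i)‖ := by
  rcases le_total c' c with h | h
  · exact abs_diff_le' α l n c c' hc h
  · rw [← norm_neg, neg_sub]
    exact abs_diff_le' α l n c' c hc' h

private lemma summable_d_sq (l : ℕ) (g : ℕ → ℝ) (hg : ∀ n, 0 ≤ g n)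
    (h : Summable (fun n => g n ^ 2)) :
    Summable (fun n => (∑ i ∈ range l, g (n + i)) ^ 2) := by
  have hfin : ∀ s : Finset ℕ, Summable (fun n => ∑ i ∈ s, g (n + i) ^ 2) := by
    intro s
    induction s using Finset.cons_induction with
    | empty => simpa using summable_zero
    | cons a s ha ih =>
        refine Summable.congr ((h.comp_injective (add_left_injective a)).add ih)
          (fun n => ?_)
        simp [Function.comp, Finset.sum_insert ha]
  have hsum : Summable (fun n => (l : ℝ) * ∑ i ∈ range l, g (n + i) ^ 2) :=
    Summable.mul_left _ (hfin (range l))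
  refine Summable.of_nonneg_of_le (fun n => sq_nonneg _) (fun n => ?_) hsum
  have := sq_sum_le_card_mul_sum_sq (s := range l) (f := fun i => g (n + i))
  simpa using this

private lemma core_conv (k : ℕ) (hk : 0 < k) (α : ℕ → ℂ)
    (hα : ∀ n, ‖α n‖ < 1)
    (hδ : Summable (fun n => ‖α (n + 1) - α n‖ ^ 2))
    (h0 : Tendsto α atTop (nhds 0)) :
    Conv (fun m => ((α (m + 1) - α m) * (starRingEnd ℂ) (α m)
      * (α m * (starRingEnd ℂ) (α m)) ^ (k - 1)).re) := by
  set y : ℕ → ℝ := fun m => Complex.normSq (α m) with hy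
  have hy0 : ∀ m, 0 ≤ y m := fun m => Complex.normSq_nonneg _
  have hy1 : ∀ m, y m ≤ 1 := by
    intro m
    have h2 : ‖α m‖ ^ 2 ≤ 1 := pow_le_one₀ (norm_nonneg _) (hα m).le
    rwa [Complex.sq_norm] at h2
  have hterm : ∀ m, ((α (m + 1) - α m) * (starRingEnd ℂ) (α m)
      * (α m * (starRingEnd ℂ) (α m)) ^ (k - 1)).re
      = (y (m + 1) - y m - Complex.normSq (α (m + 1) - α m)) / 2 * y m ^ (k - 1) := by
    intro m
    rw [Complex.mul_conj, ← Complex.ofReal_pow, mul_comm ((α (m + 1) - α m) * _),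
      Complex.re_ofReal_mul, re_sub_mul_conj]
    ring
  have hT : Conv (fun m => y (m + 1) ^ k / (2 * k) - y m ^ k / (2 * k)) := by
    refine conv_telescope (b := fun m => y m ^ k / (2 * k)) (L := 0) ?_
    have hy0' : Tendsto y atTop (nhds 0) := by
      have := (Complex.continuous_normSq.tendsto 0).comp h0
      simpa [hy, Function.comp_def] using this
    have hpk : Tendsto (fun m => y m ^ k) atTop (nhds 0) := by
      simpa [zero_pow hk.ne'] using hy0'.pow k
    simpa using hpk.div_const (2 * k)
  refine Conv.of_sub_summable hT ?_
  refine Summable.of_abs ?_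
  have hbound : Summable (fun n => (2 * (k : ℝ) + 1) * ‖α (n + 1) - α n‖ ^ 2) :=
    hδ.mul_left _
  refine Summable.of_nonneg_of_le (fun n => abs_nonneg _) (fun m => ?_) hbound
  rw [hterm m]
  set x := y (m + 1) with hx
  set yy := y m with hyy
  set e := ‖α (m + 1) - α m‖ with he
  have hde : Complex.normSq (α (m + 1) - α m) = e ^ 2 := (Complex.sq_norm _).symm
  have he0 : 0 ≤ e := norm_nonneg _
  have ha : |x - yy| ≤ 2 * e := by
    have h1 : |‖α (m + 1)‖ - ‖α m‖| ≤ e :=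
      abs_norm_sub_norm_le _ _
    have h2 : x - yy = (‖α (m + 1)‖ + ‖α m‖)
        * (‖α (m + 1)‖ - ‖α m‖) := by
      rw [hx, hyy, hy]
      simp only [← Complex.sq_norm]
      ring
    rw [h2, abs_mul]
    have h3 : |‖α (m + 1)‖ + ‖α m‖| ≤ 2 := by
      rw [abs_of_nonneg (by positivity)]
      have := (hα (m + 1)).le
      have := (hα m).le
      linarith
    exact mul_le_mul h3 h1 (abs_nonneg _) (by norm_num)
  have hxy2 : (x - yy) ^ 2 ≤ 4 * e ^ 2 := by nlinarith [abs_nonneg (x - yy), sq_abs (x - yy)]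
  have hid : (x - yy - Complex.normSq (α (m + 1) - α m)) / 2 * yy ^ (k - 1)
      - (x ^ k / (2 * k) - yy ^ k / (2 * k))
      = ((x - yy) * (k * yy ^ (k - 1)) - (x ^ k - yy ^ k)) / (2 * k)
        - Complex.normSq (α (m + 1) - α m) / 2 * yy ^ (k - 1) := by
    have hk' : (2 * (k : ℝ)) ≠ 0 := by positivity
    field_simp
    ring
  rw [hid]
  have hnum := poly_ineq (hy0 (m + 1)) (hy1 (m + 1)) (hy0 m) (hy1 m) k
  have hpos : (0 : ℝ) < 2 * k := by positivity
  have h1 : |((x - yy) * (k * yy ^ (k - 1)) - (x ^ k - yy ^ k)) / (2 * k)| ≤ 2 * k * e ^ 2 := by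
    rw [abs_div, abs_of_pos hpos, div_le_iff₀ hpos]
    have hmul : (k : ℝ) ^ 2 * ((x - yy) ^ 2) ≤ (k : ℝ) ^ 2 * (4 * e ^ 2) :=
      mul_le_mul_of_nonneg_left hxy2 (by positivity)
    nlinarith [hnum]
  have h2 : |Complex.normSq (α (m + 1) - α m) / 2 * yy ^ (k - 1)| ≤ e ^ 2 / 2 := by
    rw [abs_mul, hde, abs_div]
    have : |yy ^ (k - 1)| ≤ 1 := by
      rw [abs_pow, abs_of_nonneg (hy0 m)]
      exact pow_le_one₀ (hy0 m) (hy1 m)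
    calc |e ^ 2| / |2| * |yy ^ (k - 1)| ≤ |e ^ 2| / |2| * 1 := by
          exact mul_le_mul_of_nonneg_left this (by positivity)
      _ = e ^ 2 / 2 := by rw [mul_one, abs_of_nonneg (sq_nonneg e)]; norm_num
  calc |_ - _| ≤ |((x - yy) * (k * yy ^ (k - 1)) - (x ^ k - yy ^ k)) / (2 * k)|
        + |Complex.normSq (α (m + 1) - α m) / 2 * yy ^ (k - 1)| := abs_sub _ _
    _ ≤ 2 * k * e ^ 2 + e ^ 2 / 2 := add_le_add h1 h2
    _ ≤ (2 * (k : ℝ) + 1) * e ^ 2 := by nlinarith [sq_nonneg e]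

private lemma abs_pair_sub (x y v : ℂ) (hy : ‖y‖ ≤ 1) (hv : ‖v‖ ≤ 1)
    (dn : ℝ) (hx : ‖x - v‖ ≤ dn)
    (hyv : ‖y - (starRingEnd ℂ) v‖ ≤ dn) :
    ‖x * y - v * (starRingEnd ℂ) v‖ ≤ 2 * dn := by
  have hid : x * y - v * (starRingEnd ℂ) v = (x - v) * y + v * (y - (starRingEnd ℂ) v) := by ring
  rw [hid]
  calc ‖(x - v) * y + v * (y - (starRingEnd ℂ) v)‖
      ≤ ‖(x - v) * y‖ + ‖v * (y - (starRingEnd ℂ) v)‖ :=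
        norm_add_le _ _
    _ = ‖x - v‖ * ‖y‖ + ‖v‖ * ‖y - (starRingEnd ℂ) v‖ := by
        rw [norm_mul, norm_mul]
    _ ≤ dn * 1 + 1 * dn := by
        have h0 : 0 ≤ dn := (norm_nonneg _).trans hx
        exact add_le_add (mul_le_mul hx hy (norm_nonneg _) h0)
          (mul_le_mul hv hyv (norm_nonneg _) zero_le_one)
    _ = 2 * dn := by ring

private lemma abs_lin_sub_target (k : ℕ) (hk : 0 < k) (u v : ℂ)
    (hu : ‖u‖ ≤ 1) (hv : ‖v‖ ≤ 1) (dn : ℝ)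
    (huv : ‖u - v‖ ≤ dn) (T : Finset ℕ) (hcard : T.card = k - 1) (G : ℕ → ℂ)
    (hG1 : ∀ j ∈ T, ‖G j‖ ≤ 1)
    (hGc : ∀ j ∈ T, ‖G j - v * (starRingEnd ℂ) v‖ ≤ 2 * dn) :
    ‖(starRingEnd ℂ) u * ∏ j ∈ T, G j
      - (starRingEnd ℂ) v * (v * (starRingEnd ℂ) v) ^ (k - 1)‖ ≤ 2 * k * dn := by
  have hdn0 : 0 ≤ dn := (norm_nonneg _).trans huv
  have hY : (v * (starRingEnd ℂ) v) ^ (k - 1) = ∏ _j ∈ T, (v * (starRingEnd ℂ) v) := by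
    rw [Finset.prod_const, hcard]
  rw [hY]
  have hkey : (starRingEnd ℂ) u * ∏ j ∈ T, G j
      - (starRingEnd ℂ) v * ∏ _j ∈ T, (v * (starRingEnd ℂ) v)
      = ((starRingEnd ℂ) u - (starRingEnd ℂ) v) * ∏ j ∈ T, G j
        + (starRingEnd ℂ) v * (∏ j ∈ T, G j - ∏ _j ∈ T, (v * (starRingEnd ℂ) v)) := by
    ring
  rw [hkey]
  have hvv : ‖v * (starRingEnd ℂ) v‖ ≤ 1 := by
    rw [norm_mul, Complex.norm_conj]
    exact mul_le_one₀ hv (norm_nonneg _) hv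
  have hprod1 : ‖∏ j ∈ T, G j‖ ≤ 1 := by
    rw [norm_prod]
    exact Finset.prod_le_one (fun j _ => norm_nonneg _) hG1
  have huv' : ‖(starRingEnd ℂ) u - (starRingEnd ℂ) v‖ ≤ dn := by
    rw [← map_sub, Complex.norm_conj]
    exact huv
  have hPP : ‖∏ j ∈ T, G j - ∏ _j ∈ T, (v * (starRingEnd ℂ) v)‖
      ≤ (k - 1 : ℕ) * (2 * dn) := by
    calc ‖∏ j ∈ T, G j - ∏ _j ∈ T, (v * (starRingEnd ℂ) v)‖
        ≤ ∑ j ∈ T, ‖G j - v * (starRingEnd ℂ) v‖ :=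
          abs_prod_sub_prod_le T G _ hG1 (fun j _ => hvv)
      _ ≤ T.card * (2 * dn) := by
          refine Finset.sum_le_card_nsmul T _ _ hGc |>.trans ?_
          rw [nsmul_eq_mul]
      _ = (k - 1 : ℕ) * (2 * dn) := by rw [hcard]
  calc ‖_‖
      ≤ ‖((starRingEnd ℂ) u - (starRingEnd ℂ) v) * ∏ j ∈ T, G j‖
        + ‖(starRingEnd ℂ) v * (∏ j ∈ T, G j - ∏ _j ∈ T, (v * (starRingEnd ℂ) v))‖ :=
        norm_add_le _ _
    _ ≤ dn * 1 + 1 * ((k - 1 : ℕ) * (2 * dn)) := by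
        rw [norm_mul, norm_mul]
        refine add_le_add (mul_le_mul huv' hprod1 (norm_nonneg _) hdn0)
          (mul_le_mul ?_ hPP (norm_nonneg _) zero_le_one)
        rw [Complex.norm_conj]; exact hv
    _ ≤ 2 * k * dn := by
        have hcast : ((k - 1 : ℕ) : ℝ) = (k : ℝ) - 1 := by
          rw [Nat.cast_sub hk]; norm_num
        rw [hcast]
        nlinarith [hdn0]

private lemma conv_of_V (k l s : ℕ) (hk : 0 < k) (hs1 : s + 1 ≤ l) (α : ℕ → ℂ)
    (hα : ∀ n, ‖α n‖ < 1)
    (hδ : Summable (fun n => ‖α (n + 1) - α n‖ ^ 2))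
    (h0 : Tendsto α atTop (nhds 0)) (V : ℕ → ℂ) (g : ℕ → ℝ)
    (hre : ∀ n, g n = ((α (n + s + 1) - α (n + s)) * V n).re)
    (hclose : ∀ n, ‖V n - (starRingEnd ℂ) (α (n + s))
        * (α (n + s) * (starRingEnd ℂ) (α (n + s))) ^ (k - 1)‖
      ≤ 2 * k * (∑ i ∈ Finset.range l, ‖α (n + i + 1) - α (n + i)‖)) :
    Conv g := by
  have hcore := core_conv k hk α hα hδ h0
  have hshift := hcore.shift s
  have hd0 : ∀ n, 0 ≤ ∑ i ∈ Finset.range l, ‖α (n + i + 1) - α (n + i)‖ :=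
    fun n => Finset.sum_nonneg fun i _ => norm_nonneg _
  have hdsum : Summable
      (fun n => (∑ i ∈ Finset.range l, ‖α (n + i + 1) - α (n + i)‖) ^ 2) :=
    summable_d_sq l (fun m => ‖α (m + 1) - α m‖) (fun m => norm_nonneg _) hδ
  have hbound : Summable (fun n => (2 * (k : ℝ))
      * (∑ i ∈ Finset.range l, ‖α (n + i + 1) - α (n + i)‖) ^ 2) :=
    hdsum.mul_left _
  refine Conv.of_sub_summable hshift (Summable.of_abs
    (Summable.of_nonneg_of_le (fun n => abs_nonneg _) (fun n => ?_) hbound))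
  set dn := ∑ i ∈ Finset.range l, ‖α (n + i + 1) - α (n + i)‖ with hdn
  have hδle : ‖α (n + s + 1) - α (n + s)‖ ≤ dn := by
    have := abs_diff_le α l n (s + 1) s hs1 (Nat.le_of_succ_le hs1)
    rwa [← Nat.add_assoc] at this
  set tgt := (starRingEnd ℂ) (α (n + s)) * (α (n + s) * (starRingEnd ℂ) (α (n + s))) ^ (k - 1)
    with htgt
  have hsub : g n - ((α (n + s + 1) - α (n + s)) * (starRingEnd ℂ) (α (n + s))
      * (α (n + s) * (starRingEnd ℂ) (α (n + s))) ^ (k - 1)).re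
      = ((α (n + s + 1) - α (n + s)) * (V n - tgt)).re := by
    rw [hre n, ← Complex.sub_re]
    congr 1
    rw [htgt]
    ring
  rw [hsub]
  calc |((α (n + s + 1) - α (n + s)) * (V n - tgt)).re|
      ≤ ‖(α (n + s + 1) - α (n + s)) * (V n - tgt)‖ := Complex.abs_re_le_norm _
    _ = ‖α (n + s + 1) - α (n + s)‖ * ‖V n - tgt‖ := norm_mul _ _
    _ ≤ dn * (2 * k * dn) := by
        exact mul_le_mul hδle (hclose n) (norm_nonneg _) (hd0 n)
    _ = 2 * (k : ℝ) * dn ^ 2 := by ring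

private lemma step_conv (k l : ℕ) (hk : 0 < k) (α : ℕ → ℂ)
    (hα : ∀ n, ‖α n‖ < 1)
    (hδ : Summable (fun n => ‖α (n + 1) - α n‖ ^ 2))
    (h0 : Tendsto α atTop (nhds 0))
    (t : ℕ → ℕ) (ht : ∀ i < 2 * k, t i ≤ l) (i0 : ℕ) (hi0 : i0 < 2 * k) (hpos : 0 < t i0) :
    Conv (fun n =>
      (∏ j ∈ Finset.range k, α (n + t (2 * j)) * (starRingEnd ℂ) (α (n + t (2 * j + 1)))).re
      - (∏ j ∈ Finset.range k,
          α (n + Function.update t i0 (t i0 - 1) (2 * j)) *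
          (starRingEnd ℂ) (α (n + Function.update t i0 (t i0 - 1) (2 * j + 1)))).re) := by
  have habs1 : ∀ m, ‖α m‖ ≤ 1 := fun m => (hα m).le
  set t' := Function.update t i0 (t i0 - 1) with ht'def
  set s := t i0 - 1 with hsdef
  have hti0 : t i0 = s + 1 := by omega
  have hs1 : s + 1 ≤ l := by rw [← hti0]; exact ht i0 hi0
  have hsl : s ≤ l := by omega
  have hdiffle : ∀ n c c', c ≤ l → c' ≤ l → ‖α (n + c) - α (n + c')‖
      ≤ ∑ i ∈ Finset.range l, ‖α (n + i + 1) - α (n + i)‖ :=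
    fun n c c' hc hc' => abs_diff_le α l n c c' hc hc'
  have hd0 : ∀ n, 0 ≤ ∑ i ∈ Finset.range l, ‖α (n + i + 1) - α (n + i)‖ :=
    fun n => Finset.sum_nonneg fun i _ => norm_nonneg _
  rcases Nat.even_or_odd i0 with ⟨j0, hj0⟩ | ⟨j0, hj0⟩
  · -- even case : i0 = 2 * j0
    have hi0e : i0 = 2 * j0 := by omega
    have hj0k : j0 < k := by omega
    set c := t (2 * j0 + 1) with hcdef
    have hcl : c ≤ l := ht _ (by omega)
    set R : ℕ → ℂ := fun n => ∏ j ∈ (Finset.range k).erase j0,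
      α (n + t (2 * j)) * (starRingEnd ℂ) (α (n + t (2 * j + 1))) with hRdef
    set V : ℕ → ℂ := fun n => (starRingEnd ℂ) (α (n + c)) * R n with hVdef
    have hProd : ∀ n, ∏ j ∈ Finset.range k,
        α (n + t (2 * j)) * (starRingEnd ℂ) (α (n + t (2 * j + 1)))
        = (α (n + s + 1) * (starRingEnd ℂ) (α (n + c))) * R n := by
      intro n
      rw [← Finset.mul_prod_erase (Finset.range k) _ (Finset.mem_range.2 hj0k)]
      have e0 : t (2 * j0) = s + 1 := by rw [← hi0e]; exact hti0
      congr 1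
      rw [e0, hcdef, ← Nat.add_assoc]
    have hProd' : ∀ n, ∏ j ∈ Finset.range k,
        α (n + t' (2 * j)) * (starRingEnd ℂ) (α (n + t' (2 * j + 1)))
        = (α (n + s) * (starRingEnd ℂ) (α (n + c))) * R n := by
      intro n
      rw [← Finset.mul_prod_erase (Finset.range k) _ (Finset.mem_range.2 hj0k)]
      have e1 : t' (2 * j0) = s := by
        rw [ht'def, ← hi0e]; exact Function.update_self _ _ _
      have e2 : t' (2 * j0 + 1) = c := by
        rw [ht'def, hcdef]; exact Function.update_of_ne (by omega) _ _
      congr 1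
      · rw [e1, e2]
      · refine Finset.prod_congr rfl fun j hj => ?_
        have hj' : j ≠ j0 := (Finset.mem_erase.1 hj).1
        rw [ht'def, Function.update_of_ne (by omega), Function.update_of_ne (by omega)]
    refine conv_of_V k l s hk hs1 α hα hδ h0 V _ (fun n => ?_) (fun n => ?_)
    · rw [← Complex.sub_re]
      congr 1
      rw [hProd n, hProd' n, hVdef]
      ring
    · refine abs_lin_sub_target k hk (α (n + c)) (α (n + s)) (habs1 _) (habs1 _) _
        (hdiffle n c s hcl hsl) _ (by rw [Finset.card_erase_of_mem (Finset.mem_range.2 hj0k),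
          Finset.card_range]) _ (fun j hj => ?_) (fun j hj => ?_)
      · rw [norm_mul, Complex.norm_conj]
        exact mul_le_one₀ (habs1 _) (norm_nonneg _) (habs1 _)
      · have hj2 : j < k := Finset.mem_range.1 (Finset.mem_erase.1 hj).2
        refine abs_pair_sub _ _ _ (by rw [Complex.norm_conj]; exact habs1 _) (habs1 _) _
          (hdiffle n (t (2 * j)) s (ht _ (by omega)) hsl) ?_
        rw [← map_sub, Complex.norm_conj]
        exact hdiffle n (t (2 * j + 1)) s (ht _ (by omega)) hsl
  · -- odd case : i0 = 2 * j0 + 1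
    have hj0k : j0 < k := by omega
    set c := t (2 * j0) with hcdef
    have hcl : c ≤ l := ht _ (by omega)
    set G : ℕ → ℕ → ℂ := fun n j => (starRingEnd ℂ) (α (n + t (2 * j))) * α (n + t (2 * j + 1))
      with hGdef
    set V : ℕ → ℂ := fun n => (starRingEnd ℂ) (α (n + c)) * ∏ j ∈ (Finset.range k).erase j0, G n j
      with hVdef
    have hProd : ∀ n, ∏ j ∈ Finset.range k,
        α (n + t (2 * j)) * (starRingEnd ℂ) (α (n + t (2 * j + 1)))
        = (α (n + c) * (starRingEnd ℂ) (α (n + s + 1)))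
          * ∏ j ∈ (Finset.range k).erase j0,
            α (n + t (2 * j)) * (starRingEnd ℂ) (α (n + t (2 * j + 1))) := by
      intro n
      rw [← Finset.mul_prod_erase (Finset.range k) _ (Finset.mem_range.2 hj0k)]
      have e0 : t (2 * j0 + 1) = s + 1 := by rw [show 2 * j0 + 1 = i0 from by omega]; exact hti0
      congr 1
      rw [e0, hcdef, ← Nat.add_assoc]
    have hProd' : ∀ n, ∏ j ∈ Finset.range k,
        α (n + t' (2 * j)) * (starRingEnd ℂ) (α (n + t' (2 * j + 1)))
        = (α (n + c) * (starRingEnd ℂ) (α (n + s)))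
          * ∏ j ∈ (Finset.range k).erase j0,
            α (n + t (2 * j)) * (starRingEnd ℂ) (α (n + t (2 * j + 1))) := by
      intro n
      rw [← Finset.mul_prod_erase (Finset.range k) _ (Finset.mem_range.2 hj0k)]
      have e1 : t' (2 * j0) = c := by
        rw [ht'def, hcdef]; exact Function.update_of_ne (by omega) _ _
      have e2 : t' (2 * j0 + 1) = s := by
        rw [ht'def, show 2 * j0 + 1 = i0 from by omega]; exact Function.update_self _ _ _
      congr 1
      · rw [e1, e2]
      · refine Finset.prod_congr rfl fun j hj => ?_
        have hj' : j ≠ j0 := (Finset.mem_erase.1 hj).1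
        rw [ht'def, Function.update_of_ne (by omega), Function.update_of_ne (by omega)]
    refine conv_of_V k l s hk hs1 α hα hδ h0 V _ (fun n => ?_) (fun n => ?_)
    · have hconjre : ∀ z : ℂ, ((starRingEnd ℂ) z).re = z.re := fun z => Complex.conj_re z
      rw [← Complex.sub_re, ← hconjre]
      congr 1
      rw [hProd n, hProd' n, hVdef]
      simp only [map_sub, map_mul, map_prod, Complex.conj_conj, hGdef]
      ring
    · refine abs_lin_sub_target k hk (α (n + c)) (α (n + s)) (habs1 _) (habs1 _) _
        (hdiffle n c s hcl hsl) _ (by rw [Finset.card_erase_of_mem (Finset.mem_range.2 hj0k),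
          Finset.card_range]) _ (fun j hj => ?_) (fun j hj => ?_)
      · rw [hGdef, norm_mul, Complex.norm_conj]
        exact mul_le_one₀ (habs1 _) (norm_nonneg _) (habs1 _)
      · have hj2 : j < k := Finset.mem_range.1 (Finset.mem_erase.1 hj).2
        have hrw : α (n + s) * (starRingEnd ℂ) (α (n + s))
            = (starRingEnd ℂ) (α (n + s)) * (starRingEnd ℂ) ((starRingEnd ℂ) (α (n + s))) := by
          rw [Complex.conj_conj]; ring
        rw [hGdef, hrw]
        refine abs_pair_sub _ _ _ (habs1 _) (by rw [Complex.norm_conj]; exact habs1 _) _ ?_ ?_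
        · rw [← map_sub, Complex.norm_conj]
          exact hdiffle n (t (2 * j)) s (ht _ (by omega)) hsl
        · rw [Complex.conj_conj]
          exact hdiffle n (t (2 * j + 1)) s (ht _ (by omega)) hsl

/-- If `α` lies in the unit disk, has square-summable forward differences and tends to `0`,
then the series `Σ_n ( Re(∏_{j=1}^k α_{n+t_{2j−1}} conj(α_{n+t_{2j}})) − |α_n|^{2k} )`
converges (its partial sums converge).
(Here `t (2*j)`, `t (2*j+1)` are the 0-based versions of `t_{2j+1}`, `t_{2j+2}`.) -/
theorem stmt_10 (k l : ℕ) (hk : 0 < k) (hl : 0 < l) (t : ℕ → ℕ)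
    (ht : ∀ i < 2 * k, t i ≤ l) (α : ℕ → ℂ)
    (hα : ∀ n, ‖α n‖ < 1)
    (hδ : Summable (fun n => ‖α (n + 1) - α n‖ ^ 2))
    (h0 : Tendsto α atTop (nhds 0)) :
    ∃ S : ℝ, Tendsto
      (fun N => ∑ n ∈ Finset.range N,
        ((∏ j ∈ Finset.range k,
            α (n + t (2 * j)) * (starRingEnd ℂ) (α (n + t (2 * j + 1)))).re -
          ‖α n‖ ^ (2 * k)))
      atTop (nhds S) := by
  suffices h : ∀ N (t : ℕ → ℕ), (∀ i < 2 * k, t i ≤ l) →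
      (∑ i ∈ Finset.range (2 * k), t i ≤ N) →
      Conv (fun n => (∏ j ∈ Finset.range k,
        α (n + t (2 * j)) * (starRingEnd ℂ) (α (n + t (2 * j + 1)))).re -
        ‖α n‖ ^ (2 * k)) by
    obtain ⟨S, hS⟩ := h (∑ i ∈ Finset.range (2 * k), t i) t ht le_rfl
    exact ⟨S, hS⟩
  intro N
  induction N with
  | zero =>
    intro t ht' hsum
    have hz : ∀ i, i < 2 * k → t i = 0 := by
      intro i hi
      have h1 : ∑ i ∈ Finset.range (2 * k), t i = 0 := Nat.le_zero.1 hsum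
      exact (Finset.sum_eq_zero_iff.1 h1) i (Finset.mem_range.2 hi)
    have hterm : ∀ n, (∏ j ∈ Finset.range k,
        α (n + t (2 * j)) * (starRingEnd ℂ) (α (n + t (2 * j + 1)))).re
        - ‖α n‖ ^ (2 * k) = 0 := by
      intro n
      have hfac : ∀ j ∈ Finset.range k,
          α (n + t (2 * j)) * (starRingEnd ℂ) (α (n + t (2 * j + 1)))
          = ((Complex.normSq (α n) : ℝ) : ℂ) := by
        intro j hj
        have hjk := Finset.mem_range.1 hj
        rw [hz _ (by omega), hz _ (by omega), Nat.add_zero, Complex.mul_conj]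
      rw [Finset.prod_congr rfl hfac, Finset.prod_const, Finset.card_range,
        ← Complex.ofReal_pow, Complex.ofReal_re, pow_mul, Complex.sq_norm]
      ring
    exact Conv.congr (fun n => (hterm n).symm)
      ⟨0, by simp [tendsto_const_nhds]⟩
  | succ N ih =>
    intro t ht' hsum
    by_cases hle : ∑ i ∈ Finset.range (2 * k), t i ≤ N
    · exact ih t ht' hle
    · have hex : ∃ i0, i0 < 2 * k ∧ 0 < t i0 := by
        by_contra hcon
        push_neg at hcon
        have hall : ∑ i ∈ Finset.range (2 * k), t i = 0 :=
          Finset.sum_eq_zero fun i hi => Nat.le_zero.1 (hcon i (Finset.mem_range.1 hi))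
        omega
      obtain ⟨i0, hi0, hpos⟩ := hex
      have ht'le : ∀ i < 2 * k, Function.update t i0 (t i0 - 1) i ≤ l := by
        intro i hi
        rcases eq_or_ne i i0 with rfl | hne
        · rw [Function.update_self]; exact le_trans (Nat.sub_le _ _) (ht' _ hi)
        · rw [Function.update_of_ne hne]; exact ht' i hi
      have hsum' : ∑ i ∈ Finset.range (2 * k), Function.update t i0 (t i0 - 1) i ≤ N := by
        have hmem := Finset.mem_range.2 hi0
        rw [Finset.sum_update_of_mem hmem]
        have h2 := Finset.add_sum_erase _ t hmem
        rw [Finset.erase_eq] at h2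
        omega
      have hconv' := ih _ ht'le hsum'
      have hdiff := step_conv k l hk α hα hδ h0 t ht' i0 hi0 hpos
      exact Conv.congr (fun n => by ring) (hdiff.add hconv')
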